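/- Let −3 < x < 1. Define α = arctan((x−1)/√((1−x)(3+x))) and β = arctan((x+1)/√((1−x)(3+x))). Then α + β equals arctan((x/(x+2))·√((3+x)/(1−x))) if −2 < x < 1; equals −π/2 if x = −2; and equals arctan((x/(x+2))·√((3+x)/(1−x))) − π if −3 < x < −2. -/

import Mathlib

theorem stmt_8 (x : ℝ) (hx1 : -3 < x) (hx2 : x < 1) :
    (-2 < x →
      Real.arctan ((x - 1) / Real.sqrt ((1 - x) * (3 + x))) +
        Real.arctan ((x + 1) / Real.sqrt ((1 - x) * (3 + x))) =
          Real.arctan ((x / (x + 2)) * Real.sqrt ((3 + x) / (1 - x)))) ∧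
    (x = -2 →
      Real.arctan ((x - 1) / Real.sqrt ((1 - x) * (3 + x))) +
        Real.arctan ((x + 1) / Real.sqrt ((1 - x) * (3 + x))) = -(Real.pi / 2)) ∧
    (x < -2 →
      Real.arctan ((x - 1) / Real.sqrt ((1 - x) * (3 + x))) +
        Real.arctan ((x + 1) / Real.sqrt ((1 - x) * (3 + x))) =
          Real.arctan ((x / (x + 2)) * Real.sqrt ((3 + x) / (1 - x))) - Real.pi) := by
  have h1 : (0:ℝ) < 1 - x := by linarith
  have h2 : (0:ℝ) < 3 + x := by linarith
  set s := Real.sqrt ((1 - x) * (3 + x)) with hs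
  have hs0 : 0 < s := Real.sqrt_pos.mpr (by positivity)
  have hssq : s ^ 2 = (1 - x) * (3 + x) := Real.sq_sqrt (by positivity)
  have hsq : Real.sqrt ((3 + x) / (1 - x)) = (3 + x) / s := by
    rw [show (3 + x) / (1 - x) = ((3 + x) / s) ^ 2 by
      rw [div_pow, hssq]; field_simp]
    exact Real.sqrt_sq (by positivity)
  refine ⟨?_, ?_, ?_⟩
  · intro hx
    have hmul : (x - 1) / s * ((x + 1) / s) < 1 := by
      rw [div_mul_div_comm, div_lt_one (by positivity)]
      nlinarith [hssq]
    rw [Real.arctan_add hmul]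
    congr 1
    rw [hsq]
    have hx2' : x + 2 ≠ 0 := by linarith
    have hne : 1 - (x - 1) / s * ((x + 1) / s) ≠ 0 := by linarith [hmul]
    have hss : s * s = (1 - x) * (3 + x) := by rw [← hssq]; ring
    have hd : s * (s * s - (x - 1) * (x + 1)) ≠ 0 := by
      have : s * s - (x - 1) * (x + 1) = 2 * (x + 2) * (1 - x) := by rw [hss]; ring
      rw [this]; positivity
    field_simp [hne, hd]
    rw [div_eq_iff (by rw [hssq]; intro h; nlinarith)]
    linear_combination (x * (x + 1)) * hssq
  · intro hx
    subst hx
    have h3 : ((1:ℝ) - -2) * (3 + -2) = 3 := by norm_num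
    rw [hs, h3]
    have hneg : ((-2:ℝ) - 1) / Real.sqrt 3 < 0 := by
      apply div_neg_of_neg_of_pos <;> norm_num [Real.sqrt_pos]
    have h33 : Real.sqrt 3 * Real.sqrt 3 = 3 := Real.mul_self_sqrt (by norm_num)
    have key : ((-2:ℝ) + 1) / Real.sqrt 3 = (((-2:ℝ) - 1) / Real.sqrt 3)⁻¹ := by
      have h30 : Real.sqrt 3 ≠ 0 := by positivity
      field_simp
      nlinarith [h33]
    rw [key, Real.arctan_inv_of_neg hneg]
    ring
  · intro hx
    have hmul : 1 < (x - 1) / s * ((x + 1) / s) := by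
      rw [div_mul_div_comm, one_lt_div (by positivity)]
      nlinarith [hssq]
    have hneg : (x - 1) / s < 0 := div_neg_of_neg_of_pos (by linarith) hs0
    rw [Real.arctan_add_eq_sub_pi hmul hneg]
    congr 2
    rw [hsq]
    have hx2' : x + 2 ≠ 0 := by intro h; nlinarith
    have hne : 1 - (x - 1) / s * ((x + 1) / s) ≠ 0 := by nlinarith [hmul]
    have hss : s * s = (1 - x) * (3 + x) := by rw [← hssq]; ring
    have hd : s * (s * s - (x - 1) * (x + 1)) ≠ 0 := by
      have h' : s * s - (x - 1) * (x + 1) = 2 * (x + 2) * (1 - x) := by rw [hss]; ring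
      rw [h']
      intro h
      have := mul_eq_zero.mp h
      rcases this with h | h
      · nlinarith
      · nlinarith
    field_simp [hne, hd]
    rw [div_eq_iff (by rw [hssq]; intro h; nlinarith)]
    linear_combination (x * (x + 1)) * hssq
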